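/- Let X be an n×n real symmetric matrix with spectral decomposition X = U Λ Uᵀ, where U is orthogonal and Λ = diag(λ_1, ..., λ_n). Then the unique minimizer of ‖Y − X‖_F over all n×n symmetric positive semidefinite matrices Y is Y = U Λ₊ Uᵀ, where Λ₊ = diag(max{λ_1, 0}, ..., max{λ_n, 0}); that is, the Euclidean (Frobenius-norm) projection onto the positive semidefinite cone is obtained by positive thresholding of the eigenvalues. -/

import Mathlib

open Matrix

/-- The Frobenius norm of a real matrix. -/
noncomputable def frobNorm {n : ℕ} (M : Matrix (Fin n) (Fin n) ℝ) : ℝ :=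
  Real.sqrt (∑ i, ∑ j, (M i j) ^ 2)

private lemma frobsum_eq_trace {n : ℕ} (M : Matrix (Fin n) (Fin n) ℝ) :
    ∑ i, ∑ j, (M i j) ^ 2 = (Mᵀ * M).trace := by
  rw [Matrix.trace]
  simp only [Matrix.diag_apply, Matrix.mul_apply, Matrix.transpose_apply]
  rw [Finset.sum_comm]
  congr 1; ext i; congr 1; ext j; ring

private lemma frobsum_conj {n : ℕ} (U M : Matrix (Fin n) (Fin n) ℝ)
    (hU : U * Uᵀ = 1) :
    ∑ i, ∑ j, ((Uᵀ * M * U) i j) ^ 2 = ∑ i, ∑ j, (M i j) ^ 2 := by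
  rw [frobsum_eq_trace, frobsum_eq_trace]
  have key : (Uᵀ * M * U)ᵀ * (Uᵀ * M * U) = Uᵀ * (Mᵀ * M) * U := by
    simp only [Matrix.transpose_mul, Matrix.transpose_transpose, Matrix.mul_assoc]
    rw [show U * (Uᵀ * (M * U)) = M * U from by
      rw [← Matrix.mul_assoc, hU, Matrix.one_mul]]
  rw [key, Matrix.trace_mul_cycle, ← Matrix.mul_assoc, hU, Matrix.one_mul]

private lemma sandwich {n : ℕ} (U D : Matrix (Fin n) (Fin n) ℝ)
    (hU' : Uᵀ * U = 1) : Uᵀ * (U * D * Uᵀ) * U = D := by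
  have h : Uᵀ * (U * D * Uᵀ) * U = (Uᵀ * U) * D * (Uᵀ * U) := by
    simp only [Matrix.mul_assoc]
  rw [h, hU', Matrix.one_mul, Matrix.mul_one]

private lemma psd_diag_nonneg {n : ℕ} {Z : Matrix (Fin n) (Fin n) ℝ}
    (hZ : Z.PosSemidef) (i : Fin n) : 0 ≤ Z i i := by
  have := hZ.dotProduct_mulVec_nonneg (Pi.single i 1)
  simpa [dotProduct, mulVec, Pi.single_apply, Finset.sum_ite_eq] using this

private lemma scalar_le (z l : ℝ) (hz : 0 ≤ z) : (max l 0 - l) ^ 2 ≤ (z - l) ^ 2 := by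
  rcases le_or_gt 0 l with h | h
  · nlinarith [sq_nonneg (z - l), max_eq_left h]
  · have : max l 0 = 0 := max_eq_right h.le
    nlinarith [this]

private lemma scalar_lt (z l : ℝ) (hz : 0 ≤ z) (hne : z ≠ max l 0) :
    (max l 0 - l) ^ 2 < (z - l) ^ 2 := by
  rcases le_or_gt 0 l with h | h
  · have h1 : max l 0 = l := max_eq_left h
    have : z ≠ l := by rw [h1] at hne; exact hne
    have h2 : (z - l) ≠ 0 := sub_ne_zero.mpr this
    have h3 : 0 < (z - l) ^ 2 := by positivity
    nlinarith
  · have h1 : max l 0 = 0 := max_eq_right h.le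
    have hz' : 0 < z := lt_of_le_of_ne hz (by rw [h1] at hne; exact Ne.symm hne)
    nlinarith

private lemma double_sum_lt {n : ℕ} (f g : Fin n → Fin n → ℝ)
    (hle : ∀ i j, f i j ≤ g i j) (i0 j0 : Fin n) (hlt : f i0 j0 < g i0 j0) :
    ∑ i, ∑ j, f i j < ∑ i, ∑ j, g i j := by
  exact Finset.sum_lt_sum (fun i _ => Finset.sum_le_sum fun j _ => hle i j)
    ⟨i0, Finset.mem_univ _,
      Finset.sum_lt_sum (fun j _ => hle i0 j) ⟨j0, Finset.mem_univ _, hlt⟩⟩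

theorem psd_projection_eigenvalue_thresholding (n : ℕ)
    (X U : Matrix (Fin n) (Fin n) ℝ) (lam : Fin n → ℝ)
    (hU : U * Uᵀ = 1) (hU' : Uᵀ * U = 1)
    (hX : X = U * Matrix.diagonal lam * Uᵀ) :
    (U * Matrix.diagonal (fun i => max (lam i) 0) * Uᵀ).PosSemidef ∧
    ∀ Y : Matrix (Fin n) (Fin n) ℝ, Y.PosSemidef →
      Y ≠ U * Matrix.diagonal (fun i => max (lam i) 0) * Uᵀ →
      frobNorm (U * Matrix.diagonal (fun i => max (lam i) 0) * Uᵀ - X) <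
      frobNorm (Y - X) := by
  set L := Matrix.diagonal lam with hL
  set Lp := Matrix.diagonal (fun i => max (lam i) 0) with hLp
  have hLpPSD : Lp.PosSemidef := by
    rw [hLp]
    exact Matrix.posSemidef_diagonal_iff.mpr fun i => le_max_right _ _
  have hUH : Uᴴ = Uᵀ := by
    ext i j; simp [Matrix.conjTranspose_apply]
  constructor
  · have := hLpPSD.mul_mul_conjTranspose_same U
    rwa [hUH] at this
  intro Y hY hYne
  have key0 : Uᵀ * (U * Lp * Uᵀ - X) * U = Lp - L := by
    rw [hX, Matrix.mul_sub, Matrix.sub_mul, sandwich U Lp hU', sandwich U L hU']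
  set Z := Uᵀ * Y * U with hZdef
  have hZPSD : Z.PosSemidef := by
    have := hY.conjTranspose_mul_mul_same U
    rwa [hUH] at this
  have key1 : Uᵀ * (Y - X) * U = Z - L := by
    rw [hX, Matrix.mul_sub, Matrix.sub_mul, sandwich U L hU']
  have hZne : Z ≠ Lp := by
    intro h
    apply hYne
    have hh : U * Z * Uᵀ = U * Lp * Uᵀ := by rw [h]
    calc Y = (U * Uᵀ) * Y * (U * Uᵀ) := by rw [hU]; simp
      _ = U * Z * Uᵀ := by simp only [hZdef, Matrix.mul_assoc]
      _ = U * Lp * Uᵀ := hh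
  have e1 : ∑ i, ∑ j, ((U * Lp * Uᵀ - X) i j) ^ 2 = ∑ i, ∑ j, ((Lp - L) i j) ^ 2 := by
    rw [← frobsum_conj U (U * Lp * Uᵀ - X) hU, key0]
  have e2 : ∑ i, ∑ j, ((Y - X) i j) ^ 2 = ∑ i, ∑ j, ((Z - L) i j) ^ 2 := by
    rw [← frobsum_conj U (Y - X) hU, key1]
  have hex : ∃ p : Fin n × Fin n, Z p.1 p.2 ≠ Lp p.1 p.2 := by
    by_contra h
    push_neg at h
    exact hZne (Matrix.ext fun i j => h (i, j))
  obtain ⟨⟨i0, j0⟩, hp₀⟩ := hex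
  have hle : ∀ i j : Fin n, ((Lp - L) i j) ^ 2 ≤ ((Z - L) i j) ^ 2 := by
    intro i j
    by_cases hij : i = j
    · subst hij
      simp only [hLp, hL, Matrix.sub_apply, Matrix.diagonal_apply_eq]
      exact scalar_le _ _ (psd_diag_nonneg hZPSD i)
    · simp only [hLp, hL, Matrix.sub_apply, Matrix.diagonal_apply_ne _ hij, sub_zero,
        sub_self]
      simpa using sq_nonneg (Z i j)
  have hlt : ((Lp - L) i0 j0) ^ 2 < ((Z - L) i0 j0) ^ 2 := by
    by_cases hij : i0 = j0
    · subst hij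
      simp only [hLp, Matrix.diagonal_apply_eq] at hp₀
      simp only [hLp, hL, Matrix.sub_apply, Matrix.diagonal_apply_eq]
      exact scalar_lt _ _ (psd_diag_nonneg hZPSD i0) hp₀
    · simp only [hLp, Matrix.diagonal_apply_ne _ hij] at hp₀
      simp only [hLp, hL, Matrix.sub_apply, Matrix.diagonal_apply_ne _ hij, sub_zero,
        sub_self]
      have h3 : (0:ℝ) < (Z i0 j0) ^ 2 := by positivity
      simpa using h3
  have hsum := double_sum_lt _ _ hle i0 j0 hlt
  unfold frobNorm
  rw [e1, e2]
  exact Real.sqrt_lt_sqrt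
    (Finset.sum_nonneg fun i _ => Finset.sum_nonneg fun j _ => sq_nonneg _) hsum
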